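/- Let μ be a probability measure on ℝ and λ ∈ (0,1). Then scaling all free cumulants of μ by λ need not yield a positive distribution: if μ = (δ_{-1} + δ_{1})/2, then for every λ ∈ (0,1) there is no probability measure whose free cumulants equal λ times the free cumulants of μ. -/

import Mathlib

open MeasureTheory
open scoped ENNReal

/-- The free moment–cumulant relation for a (scalar) moment sequence `m` and cumulant
sequence `κ`: `m 0 = 1` and, for `n ≥ 1`,
`mₙ = Σ_{s=1}^n κ_s Σ_{i₁+⋯+i_s = n-s} m_{i₁} ⋯ m_{i_s}`
(the standard recursion equivalent to the sum over non-crossing partitions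
`mₙ = Σ_{π ∈ NC(n)} Π_{V ∈ π} κ_{|V|}`). -/
def MomCumRel (m κ : ℕ → ℝ) : Prop :=
  m 0 = 1 ∧ ∀ n : ℕ, 1 ≤ n →
    m n = ∑ s ∈ Finset.Icc 1 n, κ s *
      ∑ v ∈ Finset.Nat.antidiagonalTuple s (n - s), ∏ i, m (v i)


private lemma AT_eval21 (m : ℕ → ℝ) :
    ∑ x ∈ Finset.Nat.antidiagonalTuple 2 1, m (x 0) * m (x 1) = m 0 * m 1 + m 1 * m 0 := by
  rw [show Finset.Nat.antidiagonalTuple 2 1 = {![0,1], ![1,0]} from by decide,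
    Finset.sum_insert (by decide), Finset.sum_singleton]
  norm_num

private lemma AT_eval22 (m : ℕ → ℝ) :
    ∑ x ∈ Finset.Nat.antidiagonalTuple 2 2, m (x 0) * m (x 1)
      = m 0 * m 2 + m 1 * m 1 + m 2 * m 0 := by
  rw [show Finset.Nat.antidiagonalTuple 2 2 = {![0,2], ![1,1], ![2,0]} from by decide,
    Finset.sum_insert (by decide), Finset.sum_insert (by decide), Finset.sum_singleton]
  norm_num; ring

private lemma AT_eval31 (m : ℕ → ℝ) :
    ∑ x ∈ Finset.Nat.antidiagonalTuple 3 1, m (x 0) * m (x 1) * m (x 2)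
      = 3 * (m 0 * m 0 * m 1) := by
  rw [show Finset.Nat.antidiagonalTuple 3 1 = {![0,0,1], ![0,1,0], ![1,0,0]} from by decide,
    Finset.sum_insert (by decide), Finset.sum_insert (by decide), Finset.sum_singleton]
  norm_num [Matrix.cons_val_two, Matrix.vecHead, Matrix.vecTail]; ring

private lemma moments_eval (m κ : ℕ → ℝ) (h : MomCumRel m κ) :
    m 1 = κ 1 ∧ m 2 = κ 1 * m 1 + κ 2 ∧
    m 3 = κ 1 * m 2 + κ 2 * (m 1 + m 1) + κ 3 ∧
    m 4 = κ 1 * m 3 + κ 2 * (m 2 + m 1 * m 1 + m 2) + κ 3 * (3 * m 1) + κ 4 := by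
  obtain ⟨h0, h⟩ := h
  have e1 := h 1 le_rfl
  have e2 := h 2 (by norm_num)
  have e3 := h 3 (by norm_num)
  have e4 := h 4 (by norm_num)
  rw [show Finset.Icc 1 1 = {1} from rfl, Finset.sum_singleton] at e1
  rw [show Finset.Icc 1 2 = {1, 2} from rfl, Finset.sum_insert (by decide),
    Finset.sum_singleton] at e2
  rw [show Finset.Icc 1 3 = {1, 2, 3} from rfl, Finset.sum_insert (by decide),
    Finset.sum_insert (by decide), Finset.sum_singleton] at e3
  rw [show Finset.Icc 1 4 = {1, 2, 3, 4} from rfl, Finset.sum_insert (by decide),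
    Finset.sum_insert (by decide), Finset.sum_insert (by decide), Finset.sum_singleton] at e4
  norm_num [Fin.prod_univ_three, AT_eval21, AT_eval22, AT_eval31, Finset.Nat.antidiagonalTuple_one,
    Finset.Nat.antidiagonalTuple_zero_right, h0] at e1 e2 e3 e4
  refine ⟨by linarith, by linarith, by linarith, by linarith⟩

/-- let `μ = (δ₋₁ + δ₁)/2` and `0 < l < 1`.  There is no probability measure
on `ℝ` whose free cumulants are `l` times the free cumulants of `μ`: the `l`-th free
convolution power of the symmetric Bernoulli distribution does not exist for `l < 1`. -/
theorem no_fractional_free_power_of_bernoulli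
    (μ : Measure ℝ) (hμ : μ = (2⁻¹ : ℝ≥0∞) • (Measure.dirac (-1) + Measure.dirac 1))
    (κ : ℕ → ℝ) (hκ : MomCumRel (fun n => ∫ x, x ^ n ∂μ) κ)
    (l : ℝ) (hl0 : 0 < l) (hl1 : l < 1) :
    ¬ ∃ ν : Measure ℝ, IsProbabilityMeasure ν ∧
        (∀ n : ℕ, Integrable (fun x => x ^ n) ν) ∧
        MomCumRel (fun n => ∫ x, x ^ n ∂ν) (fun n => l * κ n) := by
  rintro ⟨ν, hνp, hνint, hν⟩
  -- integrability w.r.t. dirac measures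
  have hdint : ∀ (a : ℝ) (f : ℝ → ℝ), Integrable f (Measure.dirac a) := by
    intro a f
    have h : f =ᵐ[Measure.dirac a] fun _ => f a := by
      rw [ae_dirac_eq]; exact Filter.eventually_pure.2 rfl
    exact (integrable_const (f a)).congr h.symm
  -- moments of μ
  have hmom : ∀ n : ℕ, (∫ x, x ^ n ∂μ) = ((-1 : ℝ) ^ n + 1) / 2 := by
    intro n
    rw [hμ, integral_smul_measure,
      integral_add_measure (hdint _ _) (hdint _ _), integral_dirac, integral_dirac]
    norm_num
    ring
  have hm1 : (∫ x, x ^ 1 ∂μ) = 0 := by rw [hmom]; norm_num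
  have hm2 : (∫ x, x ^ 2 ∂μ) = 1 := by rw [hmom]; norm_num
  have hm3 : (∫ x, x ^ 3 ∂μ) = 0 := by rw [hmom]; norm_num
  have hm4 : (∫ x, x ^ 4 ∂μ) = 1 := by rw [hmom]; norm_num
  obtain ⟨e1, e2, e3, e4⟩ := moments_eval _ _ hκ
  simp only [hm1, hm2, hm3, hm4] at e1 e2 e3 e4
  have hκ1 : κ 1 = 0 := e1.symm
  have hκ2 : κ 2 = 1 := by linarith
  have hκ3 : κ 3 = 0 := by linarith
  have hκ4 : κ 4 = -1 := by nlinarith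
  -- moments of ν
  obtain ⟨f1, f2, f3, f4⟩ := moments_eval _ _ hν
  simp only [hκ1, hκ2, hκ3, hκ4, mul_zero, mul_one, zero_mul, zero_add, add_zero,
    mul_neg] at f1 f2 f3 f4
  set M2 := (∫ x, x ^ 2 ∂ν) with hM2
  set M4 := (∫ x, x ^ 4 ∂ν) with hM4
  have hM2l : M2 = l := f2
  have hM4l : M4 = 2 * l ^ 2 - l := by
    rw [f4, f1, f2]; ring
  -- positivity: ∫ (x² - M2)² ≥ 0 gives M4 ≥ M2²
  have hpos : (0 : ℝ) ≤ ∫ x, (x ^ 2 - M2) ^ 2 ∂ν :=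
    integral_nonneg fun x => sq_nonneg _
  have hexp : (∫ x, (x ^ 2 - M2) ^ 2 ∂ν) = M4 - 2 * M2 * M2 + M2 ^ 2 := by
    have : (fun x : ℝ => (x ^ 2 - M2) ^ 2)
        = fun x : ℝ => x ^ 4 - (2 * M2) * x ^ 2 + M2 ^ 2 := by
      funext x; ring
    have hI2 : Integrable (fun x : ℝ => 2 * M2 * x ^ 2) ν := (hνint 2).const_mul _
    have hI : Integrable (fun x : ℝ => x ^ 4 - 2 * M2 * x ^ 2) ν := (hνint 4).sub hI2
    rw [this, integral_add hI (integrable_const _),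
      integral_sub (hνint 4) hI2, MeasureTheory.integral_const_mul, integral_const]
    simp [measure_univ]; rfl
  rw [hexp, hM2l, hM4l] at hpos
  nlinarith
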